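/- Let X be a Noetherian topological space and g : X → ℝ a function such that for every real δ the superlevel set {x ∈ X : g(x) ≥ δ} is closed in X. Then for every real δ there exists δ' < δ such that {x ∈ X : g(x) ≥ δ'} = {x ∈ X : g(x) ≥ δ}; in particular g takes no value in the interval [δ', δ). -/

import Mathlib

/-- If `X` is a Noetherian topological space and `g : X → ℝ` has all its superlevel
sets closed, then for every `δ` there is `δ' < δ` with `{g ≥ δ'} = {g ≥ δ}`;
in particular `g` takes no value in `[δ', δ)`. -/
theorem stmt_1 {X : Type*} [TopologicalSpace X] [TopologicalSpace.NoetherianSpace X]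
    (g : X → ℝ) (husc : ∀ δ : ℝ, IsClosed {x : X | δ ≤ g x}) (δ : ℝ) :
    ∃ δ' : ℝ, δ' < δ ∧ {x : X | δ' ≤ g x} = {x : X | δ ≤ g x} ∧
      ∀ x : X, ¬ (δ' ≤ g x ∧ g x < δ) := by
  -- the antitone chain of closed superlevel sets, viewed in the order dual of `Closeds`
  set F : ℕ → TopologicalSpace.Closeds X :=
    fun n => ⟨{x : X | δ - 1 / (n + 1) ≤ g x}, husc _⟩ with hF
  have hmono : Monotone (fun n => OrderDual.toDual (F n)) := by
    intro a b hab
    rw [OrderDual.toDual_le_toDual]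
    intro x hx
    have hx' : δ - 1 / ((b : ℝ) + 1) ≤ g x := hx
    have h1 : (1 : ℝ) / (b + 1) ≤ 1 / (a + 1) := by
      gcongr
    show δ - 1 / ((a : ℝ) + 1) ≤ g x
    linarith
  have hwf : WellFounded ((· > ·) : (TopologicalSpace.Closeds X)ᵒᵈ →
      (TopologicalSpace.Closeds X)ᵒᵈ → Prop) :=
    (inferInstance : WellFoundedLT (TopologicalSpace.Closeds X)).wf
  obtain ⟨n, hn⟩ := (wellFoundedGT_iff_monotone_chain_condition (α := (TopologicalSpace.Closeds X)ᵒᵈ)).mp ⟨hwf⟩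
    ⟨fun n => OrderDual.toDual (F n), hmono⟩
  have key : {x : X | δ - 1 / (n + 1) ≤ g x} = {x : X | δ ≤ g x} := by
    apply Set.Subset.antisymm
    · intro x hx
      simp only [Set.mem_setOf_eq] at hx ⊢
      by_contra hlt
      push_neg at hlt
      obtain ⟨m, hm⟩ := exists_nat_gt (1 / (δ - g x))
      have hpos : (0 : ℝ) < δ - g x := by linarith
      have hmpos : (0 : ℝ) < m := lt_trans (by positivity) hm
      have hsmall : 1 / ((max n m : ℕ) + 1 : ℝ) < δ - g x := by
        have h1 : (m : ℝ) ≤ (max n m : ℕ) + 1 := by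
          have := le_max_right n m
          exact_mod_cast le_trans (Nat.le_succ m) (Nat.succ_le_succ this)
        calc (1 : ℝ) / ((max n m : ℕ) + 1) ≤ 1 / m := by gcongr
          _ < δ - g x := (div_lt_iff₀ hmpos).mpr
            (by rw [div_lt_iff₀ hpos] at hm; linarith [mul_comm (δ - g x) (m : ℝ)])
      have heq : F n = F (max n m) := OrderDual.toDual_inj.mp (hn _ (le_max_left n m))
      have hxn : x ∈ (F n : Set X) := hx
      rw [heq] at hxn
      simp only [hF, TopologicalSpace.Closeds.coe_mk, Set.mem_setOf_eq] at hxn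
      linarith
    · intro x hx
      simp only [Set.mem_setOf_eq] at hx ⊢
      have : (0 : ℝ) < 1 / ((n : ℝ) + 1) := by positivity
      linarith
  have hp : (0:ℝ) < 1 / ((n:ℝ) + 1) := by positivity
  refine ⟨δ - 1 / (n + 1), by linarith, key, fun x ⟨h1, h2⟩ => ?_⟩
  have : x ∈ {x : X | δ ≤ g x} := key ▸ h1
  exact absurd h2 (not_lt.mpr this)
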